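/- Let V be a finite-dimensional vector space over a field K, and let A and B be alternating bilinear forms on V. Regard A and B as linear maps V → V* (v ↦ A(v,·)) and suppose that the kernels of A and B have the same finite dimension. Then there exists a linear automorphism g : V ≃ V such that B(x,y) = A(g x, g y) for all x, y ∈ V. -/

import Mathlib

open Module Submodule LinearMap

section Aux
variable {K V : Type*} [Field K] [AddCommGroup V] [Module K V]

theorem alt_skew (A : V →ₗ[K] V →ₗ[K] K) (hA : ∀ v, A v v = 0) (x y : V) :
    A y x = - A x y := by
  have h := hA (x + y)
  simp only [map_add, LinearMap.add_apply, hA x, hA y, zero_add, add_zero] at h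
  linear_combination h

theorem pair_isCompl (A : V →ₗ[K] V →ₗ[K] K) (hA : ∀ v, A v v = 0) {a b : V}
    (hab : A a b = 1) :
    IsCompl (span K {a, b}) (ker (A a) ⊓ ker (A b)) := by
  have hba : A b a = -1 := by rw [alt_skew A hA, hab]
  constructor
  · rw [disjoint_def]
    intro v hvP hvW
    obtain ⟨hv1, hv2⟩ := Submodule.mem_inf.mp hvW
    rw [LinearMap.mem_ker] at hv1 hv2
    obtain ⟨s, t, rfl⟩ := Submodule.mem_span_pair.mp hvP
    simp only [map_add, map_smul, smul_eq_mul, hA a, hA b, hab, hba] at hv1 hv2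
    have hs : s = 0 := by linear_combination -hv2
    have ht : t = 0 := by linear_combination hv1
    rw [hs, ht]; simp
  · rw [codisjoint_iff, eq_top_iff]
    intro v _
    rw [Submodule.mem_sup]
    refine ⟨(-(A b v)) • a + (A a v) • b, ?_, v - ((-(A b v)) • a + (A a v) • b), ?_, by abel⟩
    · exact Submodule.mem_span_pair.mpr ⟨-(A b v), A a v, rfl⟩
    · rw [Submodule.mem_inf]
      constructor <;> rw [LinearMap.mem_ker] <;>
        simp [map_sub, map_add, map_smul, hA a, hA b, hab, hba]

theorem ortho_pair (A : V →ₗ[K] V →ₗ[K] K) (hA : ∀ v, A v v = 0) {a b : V}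
    {u w : V} (hu : u ∈ span K {a, b}) (hw : w ∈ ker (A a) ⊓ ker (A b)) :
    A u w = 0 ∧ A w u = 0 := by
  obtain ⟨hw1, hw2⟩ := Submodule.mem_inf.mp hw
  rw [LinearMap.mem_ker] at hw1 hw2
  obtain ⟨s, t, rfl⟩ := Submodule.mem_span_pair.mp hu
  have h1 : A (s • a + t • b) w = 0 := by
    simp [map_add, map_smul, hw1, hw2]
  refine ⟨h1, by rw [alt_skew A hA, h1, neg_zero]⟩

variable [FiniteDimensional K V]

theorem ker_restrict_finrank (A : V →ₗ[K] V →ₗ[K] K) (hA : ∀ v, A v v = 0) {a b : V}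
    (hab : A a b = 1) :
    finrank K (ker ((A.compl₁₂ (ker (A a) ⊓ ker (A b)).subtype
        (ker (A a) ⊓ ker (A b)).subtype))) = finrank K (ker A) := by
  set W : Submodule K V := ker (A a) ⊓ ker (A b) with hW
  set AW := A.compl₁₂ W.subtype W.subtype with hAW
  have hle : ker A ≤ W := by
    intro v hv
    rw [LinearMap.mem_ker] at hv
    have h1 : A a v = 0 := by rw [alt_skew A hA, hv]; simp
    have h2 : A b v = 0 := by rw [alt_skew A hA, hv]; simp
    exact Submodule.mem_inf.mpr ⟨LinearMap.mem_ker.mpr h1, LinearMap.mem_ker.mpr h2⟩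
  have hcompl := pair_isCompl A hA hab
  have hkey : ker AW = Submodule.comap W.subtype (ker A) := by
    ext ⟨w, hw⟩
    simp only [Submodule.mem_comap, LinearMap.mem_ker, Submodule.subtype_apply]
    constructor
    · intro h
      ext v
      have hv : v ∈ span K {a, b} ⊔ W := by
        rw [codisjoint_iff.mp hcompl.2]; trivial
      obtain ⟨p, hp, w', hw', rfl⟩ := Submodule.mem_sup.mp hv
      have hp0 : A w p = 0 := (ortho_pair A hA hp hw).2
      have hw'0 : A w w' = 0 := by
        have := congrArg (fun f => f ⟨w', hw'⟩) h
        simpa [hAW, LinearMap.compl₁₂_apply] using this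
      simp [map_add, hp0, hw'0]
    · intro h
      ext ⟨w', hw'⟩
      simp [hAW, LinearMap.compl₁₂_apply, h]
  rw [hkey]
  exact LinearEquiv.finrank_eq (Submodule.comapSubtypeEquivOfLe hle)

end Aux

universe u v

theorem main_alt (K : Type u) [Field K] (n : ℕ) :
    ∀ (V₁ V₂ : Type v) [AddCommGroup V₁] [Module K V₁] [AddCommGroup V₂] [Module K V₂]
      [FiniteDimensional K V₁] [FiniteDimensional K V₂],
      finrank K V₁ = n → finrank K V₂ = n →
      ∀ (A : V₁ →ₗ[K] V₁ →ₗ[K] K) (B : V₂ →ₗ[K] V₂ →ₗ[K] K),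
        (∀ v, A v v = 0) → (∀ v, B v v = 0) →
        finrank K (LinearMap.ker A) = finrank K (LinearMap.ker B) →
        ∃ g : V₂ ≃ₗ[K] V₁, ∀ x y, B x y = A (g x) (g y) := by
  induction n using Nat.strong_induction_on with
  | _ n IH =>
    intro V₁ V₂ _ _ _ _ _ _ h1 h2 A B hA hB hker
    by_cases hA0 : A = 0
    · -- then B = 0 as well
      have hkA : LinearMap.ker A = ⊤ := by rw [LinearMap.ker_eq_top]; exact hA0
      have hkB : LinearMap.ker B = ⊤ := by
        apply Submodule.eq_top_of_finrank_eq
        rw [← hker, hkA, finrank_top, h1, h2]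
      have hB0 : B = 0 := LinearMap.ker_eq_top.mp hkB
      exact ⟨LinearEquiv.ofFinrankEq V₂ V₁ (h2.trans h1.symm), by simp [hA0, hB0]⟩
    · -- A ≠ 0, hence B ≠ 0
      have hB0 : B ≠ 0 := by
        intro h
        apply hA0
        have hkB : LinearMap.ker B = ⊤ := by rw [LinearMap.ker_eq_top]; exact h
        have hkA : LinearMap.ker A = ⊤ := by
          apply Submodule.eq_top_of_finrank_eq
          rw [hker, hkB, finrank_top, h1, h2]
        exact LinearMap.ker_eq_top.mp hkA
      -- get hyperbolic pairs
      obtain ⟨a, b, hab⟩ : ∃ a b, A a b = 1 := by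
        by_contra hc
        push_neg at hc
        apply hA0
        ext x y
        by_contra hxy
        simp only [LinearMap.zero_apply] at hxy
        exact (hc x ((A x y)⁻¹ • y)) (by
          simp only [map_smul, smul_eq_mul]
          exact inv_mul_cancel₀ hxy)
      obtain ⟨c, d, hcd⟩ : ∃ c d, B c d = 1 := by
        by_contra hc
        push_neg at hc
        apply hB0
        ext x y
        by_contra hxy
        simp only [LinearMap.zero_apply] at hxy
        exact (hc x ((B x y)⁻¹ • y)) (by
          simp only [map_smul, smul_eq_mul]
          exact inv_mul_cancel₀ hxy)
      have hba : A b a = -1 := by rw [alt_skew A hA, hab]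
      have hdc : B d c = -1 := by rw [alt_skew B hB, hcd]
      -- linear independence
      have liA : LinearIndependent K ![a, b] := by
        rw [linearIndependent_fin2]
        constructor
        · intro h
          simp only [Matrix.cons_val_one, Matrix.head_cons, Matrix.cons_val_zero] at h
          rw [h] at hab; simp at hab
        · intro s h
          simp only [Matrix.cons_val_one, Matrix.head_cons, Matrix.cons_val_zero] at h
          rw [← h] at hab
          simp [map_smul, hA b] at hab
      have liB : LinearIndependent K ![c, d] := by
        rw [linearIndependent_fin2]
        constructor
        · intro h
          simp only [Matrix.cons_val_one, Matrix.head_cons, Matrix.cons_val_zero] at h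
          rw [h] at hcd; simp at hcd
        · intro s h
          simp only [Matrix.cons_val_one, Matrix.head_cons, Matrix.cons_val_zero] at h
          rw [← h] at hcd
          simp [map_smul, hB d] at hcd
      have hrA : Set.range ![a, b] = {a, b} := by
        simp [Matrix.range_cons, Matrix.range_empty, Set.pair_comm]
      have hrB : Set.range ![c, d] = {c, d} := by
        simp [Matrix.range_cons, Matrix.range_empty, Set.pair_comm]
      -- subspaces
      set P₁ : Submodule K V₁ := span K (Set.range ![a, b]) with hP₁
      set P₂ : Submodule K V₂ := span K (Set.range ![c, d]) with hP₂
      set W₁ : Submodule K V₁ := ker (A a) ⊓ ker (A b) with hW₁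
      set W₂ : Submodule K V₂ := ker (B c) ⊓ ker (B d) with hW₂
      have hP₁' : P₁ = span K {a, b} := by rw [hP₁, hrA]
      have hP₂' : P₂ = span K {c, d} := by rw [hP₂, hrB]
      have hc₁ : IsCompl P₁ W₁ := by rw [hP₁']; exact pair_isCompl A hA hab
      have hc₂ : IsCompl P₂ W₂ := by rw [hP₂']; exact pair_isCompl B hB hcd
      have hfP₁ : finrank K P₁ = 2 := by
        rw [hP₁, finrank_span_eq_card liA]; simp
      have hfP₂ : finrank K P₂ = 2 := by
        rw [hP₂, finrank_span_eq_card liB]; simp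
      have hn2 : 2 ≤ n := by
        rw [← h1, ← hfP₁]; exact Submodule.finrank_le P₁
      have hfW₁ : finrank K W₁ = n - 2 := by
        have := Submodule.finrank_add_eq_of_isCompl hc₁
        rw [hfP₁, h1] at this; omega
      have hfW₂ : finrank K W₂ = n - 2 := by
        have := Submodule.finrank_add_eq_of_isCompl hc₂
        rw [hfP₂, h2] at this; omega
      -- restricted forms
      set AW : W₁ →ₗ[K] W₁ →ₗ[K] K := A.compl₁₂ W₁.subtype W₁.subtype with hAW
      set BW : W₂ →ₗ[K] W₂ →ₗ[K] K := B.compl₁₂ W₂.subtype W₂.subtype with hBW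
      have hAWalt : ∀ w : W₁, AW w w = 0 := fun w => by
        simp [hAW, LinearMap.compl₁₂_apply, hA]
      have hBWalt : ∀ w : W₂, BW w w = 0 := fun w => by
        simp [hBW, LinearMap.compl₁₂_apply, hB]
      have hkerW : finrank K (LinearMap.ker AW) = finrank K (LinearMap.ker BW) := by
        rw [hAW, hBW, ker_restrict_finrank A hA hab, ker_restrict_finrank B hB hcd, hker]
      obtain ⟨gW, hgW⟩ := IH (n - 2) (by omega) W₁ W₂ hfW₁ hfW₂ AW BW hAWalt hBWalt hkerW
      -- 2-dimensional part
      set bP₁ : Basis (Fin 2) K P₁ := Basis.span liA with hbP₁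
      set bP₂ : Basis (Fin 2) K P₂ := Basis.span liB with hbP₂
      set g₂ : P₂ ≃ₗ[K] P₁ := bP₂.equiv bP₁ (Equiv.refl _) with hg₂
      have hg₂b : ∀ i, ((g₂ (bP₂ i) : P₁) : V₁) = ![a, b] i := by
        intro i
        rw [hg₂, Basis.equiv_apply, Equiv.refl_apply, hbP₁, Basis.span_apply]
      have h2dim : ∀ u u' : P₂, B (u : V₂) (u' : V₂) = A ((g₂ u : P₁) : V₁) ((g₂ u' : P₁) : V₁) := by
        have key : B.compl₁₂ P₂.subtype P₂.subtype =
            A.compl₁₂ (P₁.subtype ∘ₗ g₂.toLinearMap) (P₁.subtype ∘ₗ g₂.toLinearMap) := by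
          refine bP₂.ext fun i => bP₂.ext fun j => ?_
          simp only [LinearMap.compl₁₂_apply, Submodule.subtype_apply, LinearMap.comp_apply,
            LinearEquiv.coe_coe]
          rw [hg₂b i, hg₂b j]
          have hbi : ((bP₂ i : P₂) : V₂) = ![c, d] i := by rw [hbP₂, Basis.span_apply]
          have hbj : ((bP₂ j : P₂) : V₂) = ![c, d] j := by rw [hbP₂, Basis.span_apply]
          rw [hbi, hbj]
          fin_cases i <;> fin_cases j <;>
            simp [hA, hB, hab, hba, hcd, hdc]
        intro u u'
        have := congrArg (fun f => f u u') key
        simpa [LinearMap.compl₁₂_apply] using this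
      -- assemble
      set e₁ : (P₁ × W₁) ≃ₗ[K] V₁ := Submodule.prodEquivOfIsCompl P₁ W₁ hc₁ with he₁
      set e₂ : (P₂ × W₂) ≃ₗ[K] V₂ := Submodule.prodEquivOfIsCompl P₂ W₂ hc₂ with he₂
      refine ⟨e₂.symm.trans ((g₂.prodCongr gW).trans e₁), ?_⟩
      intro x y
      set p := e₂.symm x with hp
      set q := e₂.symm y with hq
      have happ : ∀ z : P₂ × W₂, e₂ z = (z.1 : V₂) + (z.2 : V₂) := by
        intro z; rw [he₂]; exact Submodule.coe_prodEquivOfIsCompl' _ _ _ _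
      have happ1 : ∀ z : P₁ × W₁, e₁ z = (z.1 : V₁) + (z.2 : V₁) := by
        intro z; rw [he₁]; exact Submodule.coe_prodEquivOfIsCompl' _ _ _ _
      have hx : x = (p.1 : V₂) + (p.2 : V₂) := by
        conv_lhs => rw [← e₂.apply_symm_apply x]
        rw [← hp, happ p]
      have hy : y = (q.1 : V₂) + (q.2 : V₂) := by
        conv_lhs => rw [← e₂.apply_symm_apply y]
        rw [← hq, happ q]
      have hgx : (e₂.symm.trans ((g₂.prodCongr gW).trans e₁)) x
          = ((g₂ p.1 : P₁) : V₁) + ((gW p.2 : W₁) : V₁) := by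
        simp only [LinearEquiv.trans_apply, ← hp, LinearEquiv.prodCongr_apply]
        exact happ1 _
      have hgy : (e₂.symm.trans ((g₂.prodCongr gW).trans e₁)) y
          = ((g₂ q.1 : P₁) : V₁) + ((gW q.2 : W₁) : V₁) := by
        simp only [LinearEquiv.trans_apply, ← hq, LinearEquiv.prodCongr_apply]
        exact happ1 _
      rw [hgx, hgy]
      -- expand B
      have hBxy : B x y = B (p.1 : V₂) (q.1 : V₂) + B (p.2 : V₂) (q.2 : V₂) := by
        have o1 : B (p.1 : V₂) (q.2 : V₂) = 0 := by
          refine (ortho_pair B hB ?_ q.2.2).1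
          rw [← hP₂']; exact p.1.2
        have o2 : B (p.2 : V₂) (q.1 : V₂) = 0 := by
          refine (ortho_pair B hB ?_ p.2.2).2
          rw [← hP₂']; exact q.1.2
        rw [hx, hy]
        simp [map_add, o1, o2]
      have hAxy : A (((g₂ p.1 : P₁) : V₁) + ((gW p.2 : W₁) : V₁))
          (((g₂ q.1 : P₁) : V₁) + ((gW q.2 : W₁) : V₁))
          = A ((g₂ p.1 : P₁) : V₁) ((g₂ q.1 : P₁) : V₁)
            + A ((gW p.2 : W₁) : V₁) ((gW q.2 : W₁) : V₁) := by
        have o1 : A ((g₂ p.1 : P₁) : V₁) ((gW q.2 : W₁) : V₁) = 0 := by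
          refine (ortho_pair A hA ?_ (gW q.2).2).1
          rw [← hP₁']; exact (g₂ p.1).2
        have o2 : A ((gW p.2 : W₁) : V₁) ((g₂ q.1 : P₁) : V₁) = 0 := by
          refine (ortho_pair A hA ?_ (gW p.2).2).2
          rw [← hP₁']; exact (g₂ q.1).2
        simp [map_add, o1, o2]
      rw [hBxy, hAxy]
      congr 1
      · exact h2dim p.1 q.1
      · have := hgW p.2 q.2
        simpa [hAW, hBW, LinearMap.compl₁₂_apply] using this

/-- Two alternating bilinear forms on a finite-dimensional vector space over a
field `K` whose kernels have the same dimension are equivalent under `GL(V)`. -/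
theorem stmt_1 (K V : Type*) [Field K] [AddCommGroup V] [Module K V]
    [FiniteDimensional K V]
    (A B : V →ₗ[K] V →ₗ[K] K)
    (hA : ∀ v : V, A v v = 0) (hB : ∀ v : V, B v v = 0)
    (hker : Module.finrank K (LinearMap.ker A) = Module.finrank K (LinearMap.ker B)) :
    ∃ g : V ≃ₗ[K] V, ∀ x y : V, B x y = A (g x) (g y) :=
  main_alt K (finrank K V) V V rfl rfl A B hA hB hker
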